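/- Let e ≥ 1, q = 2^e, and let S be a nonempty 2-divisible set of points in PG(v−1,q). Then |S| ≥ q+1, and if |S| = q+1 then S is the set of all points of a line, i.e., there is a two-dimensional subspace L of F_q^v such that S consists exactly of the one-dimensional subspaces contained in L. -/

import Mathlib

open Module Finset

noncomputable section
open scoped Classical

variable (F : Type) [Field F] [Fintype F]

instance finiteSubmodule (v : ℕ) : Finite (Submodule F (Fin v → F)) :=
  Finite.of_injective (fun s => (s : Set (Fin v → F))) SetLike.coe_injective

/-- The points of `PG(v-1,q)`: one-dimensional subspaces of `F_q^v`. -/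
abbrev PGPoint (v : ℕ) := {W : Submodule F (Fin v → F) // finrank F W = 1}

instance (v : ℕ) : Fintype (PGPoint F v) := Fintype.ofFinite _

/-- Cardinality of a multiset of points. -/
def mCard {v : ℕ} (M : PGPoint F v → ℕ) : ℕ := ∑ P, M P

/-- Multiplicity of a subspace: the sum of multiplicities over points contained in it. -/
def mVal {v : ℕ} (M : PGPoint F v → ℕ) (S : Submodule F (Fin v → F)) : ℕ :=
  ∑ P : PGPoint F v, if P.1 ≤ S then M P else 0

/-- A multiset of points is `Δ`-divisible if `#M ≡ M(H) (mod Δ)` for every hyperplane `H`. -/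
def IsDivisibleMultiset {v : ℕ} (Δ : ℕ) (M : PGPoint F v → ℕ) : Prop :=
  ∀ H : Submodule F (Fin v → F), finrank F H = v - 1 → mCard F M ≡ mVal F M H [MOD Δ]

/-- A set of points is `Δ`-divisible if `|S| ≡ |S ∩ H| (mod Δ)` for every hyperplane `H`. -/
def IsDivisibleSet {v : ℕ} (Δ : ℕ) (S : Set (PGPoint F v)) : Prop :=
  ∀ H : Submodule F (Fin v → F), finrank F H = v - 1 →
    S.ncard ≡ (S ∩ {P | P.1 ≤ H}).ncard [MOD Δ]

/-- A linear code `C ≤ F_q^m` is `Δ`-divisible if all Hamming weights are divisible by `Δ`. -/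
def IsDivisibleCode {m : ℕ} (Δ : ℕ) (C : Submodule F (Fin m → F)) : Prop :=
  ∀ c ∈ C, Δ ∣ hammingNorm c

/-- The effective length: the number of coordinates where some codeword is nonzero. -/
def effLength {m : ℕ} (C : Submodule F (Fin m → F)) : ℕ :=
  Nat.card {i : Fin m // ∃ c ∈ C, c i ≠ 0}

/-- `s_q(a,b,i)`, with `q = p^e`, written without division:
`s_q(a,b,0) = 1 + q + ⋯ + q^a` and `s_q(a,b,i) = p^{ie-b}·(1 + q + ⋯ + q^{a-i})` for `i ≥ 1`. -/
def sQ (p e a b i : ℕ) : ℕ :=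
  if i = 0 then ∑ j ∈ Finset.range (a + 1), (p ^ e) ^ j
  else p ^ (i * e - b) * ∑ j ∈ Finset.range (a - i + 1), (p ^ e) ^ j


set_option linter.unusedSectionVars false

namespace Stmt13Aux
variable {F : Type} [Field F] [Fintype F] {v : ℕ}

/-- dot product as a bilinear map -/
def dlb : (Fin v → F) →ₗ[F] Module.Dual F (Fin v → F) :=
  LinearMap.mk₂ F (fun y z => ∑ i, y i * z i)
    (fun a b z => by simp [add_mul, Finset.sum_add_distrib])
    (fun c a z => by simp [Finset.mul_sum, mul_assoc])
    (fun y a b => by simp [mul_add, Finset.sum_add_distrib])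
    (fun c y z => by simp [Finset.mul_sum, mul_left_comm])

lemma dlb_apply (y z : Fin v → F) : dlb y z = ∑ i, y i * z i := rfl

lemma dlb_surj : Function.Surjective (dlb (F := F) (v := v)) := by
  intro φ
  refine ⟨fun i => φ (fun j => if i = j then 1 else 0), ?_⟩
  refine LinearMap.ext fun z => ?_
  rw [LinearMap.pi_apply_eq_sum_univ φ z, dlb_apply]
  simp [mul_comm]

/-- hyperplane associated to a nonzero vector -/
def Hy (y : Fin v → F) : Submodule F (Fin v → F) := LinearMap.ker (dlb y)

lemma finrank_Hy {y : Fin v → F} (hy : y ≠ 0) : finrank F (Hy y) = v - 1 := by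
  have hne : dlb (F := F) y ≠ 0 := by
    intro h
    apply hy
    funext i
    have := congrArg (fun ψ => ψ (fun j => if i = j then 1 else 0)) h
    simpa [dlb_apply, mul_comm] using this
  have hsurj : LinearMap.range (dlb (F := F) y) = ⊤ := by
    obtain ⟨z, hz⟩ : ∃ z, dlb (F := F) y z ≠ 0 := by
      by_contra h
      push_neg at h
      exact hne (LinearMap.ext fun z => h z)
    rw [Submodule.eq_top_iff']
    intro c
    exact ⟨(c * (dlb y z)⁻¹) • z, by simp [mul_assoc, inv_mul_cancel₀ hz]⟩
  have h1 : finrank F (LinearMap.range (dlb (F := F) y)) + finrank F (Hy y) = v := by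
    have := LinearMap.finrank_range_add_finrank_ker (dlb (F := F) y)
    rw [Module.finrank_fin_fun] at this
    exact this
  rw [hsurj, finrank_top, Module.finrank_self] at h1
  omega

/-- the perp space of a submodule -/
def perp (W : Submodule F (Fin v → F)) : Submodule F (Fin v → F) :=
  LinearMap.ker (W.dualRestrict.comp (dlb (F := F) (v := v)))

lemma mem_perp {W : Submodule F (Fin v → F)} {y : Fin v → F} :
    y ∈ perp W ↔ ∀ w ∈ W, dlb y w = 0 := by
  simp only [perp, LinearMap.mem_ker, LinearMap.comp_apply]
  constructor
  · intro h w hw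
    have := congrArg (fun ψ => ψ ⟨w, hw⟩) h
    simpa using this
  · intro h
    refine LinearMap.ext fun w => ?_
    simpa using h w.1 w.2

lemma le_Hy_iff {W : Submodule F (Fin v → F)} {y : Fin v → F} :
    W ≤ Hy y ↔ y ∈ perp W := by
  rw [mem_perp]
  constructor
  · intro h w hw; exact LinearMap.mem_ker.mp (h hw)
  · intro h w hw; exact LinearMap.mem_ker.mpr (h w hw)

lemma zero_mem_perp (W : Submodule F (Fin v → F)) : (0 : Fin v → F) ∈ perp W := by
  simp [mem_perp, dlb_apply]

lemma finrank_perp (W : Submodule F (Fin v → F)) :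
    finrank F (perp W) = v - finrank F W := by
  have hsurj : Function.Surjective (W.dualRestrict.comp (dlb (F := F) (v := v))) :=
    (Subspace.dualRestrict_surjective).comp dlb_surj
  have h1 : finrank F (LinearMap.range (W.dualRestrict.comp (dlb (F := F) (v := v)))) + finrank F (perp W) = v := by
    have := LinearMap.finrank_range_add_finrank_ker (W.dualRestrict.comp (dlb (F := F) (v := v)))
    rw [Module.finrank_fin_fun] at this
    exact this
  rw [LinearMap.range_eq_top.mpr hsurj, finrank_top, Subspace.dual_finrank_eq] at h1
  have h2 : finrank F W ≤ v := by
    simpa [Module.finrank_pi] using Submodule.finrank_le W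
  omega

end Stmt13Aux


namespace Stmt13Aux
variable {F : Type} [Field F] [Fintype F] {v : ℕ}

lemma card_filter_mem (W : Submodule F (Fin v → F)) :
    (univ.filter fun x => x ∈ W).card = Fintype.card F ^ finrank F W := by
  rw [← card_eq_pow_finrank (K := F) (V := W)]
  rw [← Fintype.card_subtype]

lemma card_filter_perp (W : Submodule F (Fin v → F)) :
    (univ.filter fun y : Fin v → F => y ∈ perp W).card
      = Fintype.card F ^ (v - finrank F W) := by
  rw [card_filter_mem, finrank_perp]

lemma filter_erase_zero (W : Submodule F (Fin v → F)) :
    ((univ.filter fun y : Fin v → F => y ≠ 0).filter fun y => y ∈ perp W)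
      = (univ.filter fun y : Fin v → F => y ∈ perp W).erase 0 := by
  ext y
  simp only [Finset.mem_filter, Finset.mem_erase, Finset.mem_univ, true_and]

lemma card_T_perp (W : Submodule F (Fin v → F)) :
    ((univ.filter fun y : Fin v → F => y ≠ 0).filter fun y => y ∈ perp W).card
      = Fintype.card F ^ (v - finrank F W) - 1 := by
  rw [filter_erase_zero, Finset.card_erase_of_mem (by simp [zero_mem_perp]), card_filter_perp]

lemma card_T : (univ.filter fun y : Fin v → F => y ≠ 0).card = Fintype.card F ^ v - 1 := by
  have : (univ.filter fun y : Fin v → F => y ≠ 0) = univ.erase 0 := by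
    ext y; simp
  rw [this, Finset.card_erase_of_mem (Finset.mem_univ _), Finset.card_univ,
    Fintype.card_fun, Fintype.card_fin]

lemma exists_gen (P : PGPoint F v) : ∃ p : Fin v → F, p ≠ 0 ∧ P.1 = Submodule.span F {p} := by
  have h := P.2
  have hbot : P.1 ≠ ⊥ := by
    intro h'; rw [h'] at h; simp [finrank_bot] at h
  obtain ⟨p, hp, hp0⟩ := (Submodule.ne_bot_iff _).mp hbot
  have hle : Submodule.span F {p} ≤ P.1 := (Submodule.span_singleton_le_iff_mem _ _).mpr hp
  exact ⟨p, hp0, (Submodule.eq_of_le_of_finrank_eq hle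
    (by rw [finrank_span_singleton hp0, h])).symm⟩

def gen (P : PGPoint F v) : Fin v → F := (exists_gen P).choose

lemma gen_ne (P : PGPoint F v) : gen P ≠ 0 := (exists_gen P).choose_spec.1

lemma gen_span (P : PGPoint F v) : P.1 = Submodule.span F {gen P} := (exists_gen P).choose_spec.2

lemma pt_le_iff {P : PGPoint F v} {W : Submodule F (Fin v → F)} : P.1 ≤ W ↔ gen P ∈ W := by
  rw [gen_span]; exact Submodule.span_singleton_le_iff_mem _ _

lemma mem_perp_sup {W1 W2 : Submodule F (Fin v → F)} {y : Fin v → F} :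
    y ∈ perp (W1 ⊔ W2) ↔ y ∈ perp W1 ∧ y ∈ perp W2 := by
  simp only [← le_Hy_iff, sup_le_iff]

lemma finrank_sup_two {P Q : PGPoint F v} (h : P ≠ Q) : finrank F ↥(P.1 ⊔ Q.1) = 2 := by
  have h2 : finrank F ↥(P.1 ⊔ Q.1) + finrank F ↥(P.1 ⊓ Q.1) = 2 := by
    rw [Submodule.finrank_sup_add_finrank_inf_eq, P.2, Q.2]
  have hne : P.1 ≠ P.1 ⊔ Q.1 := by
    intro heq
    have hQP : Q.1 ≤ P.1 := heq ▸ le_sup_right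
    exact h (Subtype.ext (Submodule.eq_of_le_of_finrank_eq hQP (Q.2.trans P.2.symm)).symm)
  have hlt := Submodule.finrank_lt_finrank_of_lt (lt_of_le_of_ne le_sup_left hne)
  rw [P.2] at hlt
  omega

lemma finrank_sup_three {L : Submodule F (Fin v → F)} (hL : finrank F L = 2)
    {R : PGPoint F v} (hR : ¬ R.1 ≤ L) : finrank F ↥(L ⊔ R.1) = 3 := by
  have h2 : finrank F ↥(L ⊔ R.1) + finrank F ↥(L ⊓ R.1) = 3 := by
    rw [Submodule.finrank_sup_add_finrank_inf_eq, hL, R.2]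
  have hne : L ≠ L ⊔ R.1 := by
    intro heq
    exact hR (le_trans le_sup_right heq.symm.le)
  have hlt := Submodule.finrank_lt_finrank_of_lt (lt_of_le_of_ne le_sup_left hne)
  rw [hL] at hlt
  omega

end Stmt13Aux

namespace Stmt13Aux
variable {F : Type} [Field F] [Fintype F] {v : ℕ}

lemma identA (Sf : Finset (PGPoint F v)) :
    ∑ y ∈ (univ.filter fun y : Fin v → F => y ≠ 0), (Sf.filter fun P => P.1 ≤ Hy y).card
      = Sf.card * (Fintype.card F ^ (v - 1) - 1) := by
  simp_rw [Finset.card_filter]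
  rw [Finset.sum_comm]
  have h : ∀ P ∈ Sf, (∑ y ∈ (univ.filter fun y : Fin v → F => y ≠ 0),
      if P.1 ≤ Hy y then 1 else 0) = Fintype.card F ^ (v - 1) - 1 := by
    intro P _
    rw [← Finset.card_filter]
    have heq : ((univ.filter fun y : Fin v → F => y ≠ 0).filter fun y => P.1 ≤ Hy y)
        = ((univ.filter fun y : Fin v → F => y ≠ 0).filter fun y => y ∈ perp P.1) := by
      apply Finset.filter_congr
      intro y _
      simp [le_Hy_iff]
    rw [heq, card_T_perp, P.2]
  rw [Finset.sum_congr rfl h, Finset.sum_const, smul_eq_mul]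

lemma identB (Sf : Finset (PGPoint F v)) :
    ∑ y ∈ (univ.filter fun y : Fin v → F => y ≠ 0),
        ((Sf.filter fun P => P.1 ≤ Hy y).card * (Sf.filter fun P => P.1 ≤ Hy y).card
          - (Sf.filter fun P => P.1 ≤ Hy y).card)
      = (Sf.card * Sf.card - Sf.card) * (Fintype.card F ^ (v - 2) - 1) := by
  have hoff : ∀ y : Fin v → F, (Sf.filter fun P => P.1 ≤ Hy y).offDiag
      = Sf.offDiag.filter (fun PQ => PQ.1.1 ≤ Hy y ∧ PQ.2.1 ≤ Hy y) := by
    intro y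
    ext ⟨a, b⟩
    simp only [Finset.mem_offDiag, Finset.mem_filter]
    tauto
  have hterm : ∀ y : Fin v → F,
      (Sf.filter fun P => P.1 ≤ Hy y).card * (Sf.filter fun P => P.1 ≤ Hy y).card
          - (Sf.filter fun P => P.1 ≤ Hy y).card
        = (Sf.offDiag.filter (fun PQ => PQ.1.1 ≤ Hy y ∧ PQ.2.1 ≤ Hy y)).card := by
    intro y
    rw [← hoff, Finset.offDiag_card]
  simp_rw [hterm, Finset.card_filter]
  rw [Finset.sum_comm]
  have h : ∀ PQ ∈ Sf.offDiag, (∑ y ∈ (univ.filter fun y : Fin v → F => y ≠ 0),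
      if PQ.1.1 ≤ Hy y ∧ PQ.2.1 ≤ Hy y then 1 else 0) = Fintype.card F ^ (v - 2) - 1 := by
    intro PQ hPQ
    obtain ⟨-, -, hne⟩ := Finset.mem_offDiag.mp hPQ
    rw [← Finset.card_filter]
    have heq : ((univ.filter fun y : Fin v → F => y ≠ 0).filter
          fun y => PQ.1.1 ≤ Hy y ∧ PQ.2.1 ≤ Hy y)
        = ((univ.filter fun y : Fin v → F => y ≠ 0).filter
          fun y => y ∈ perp (PQ.1.1 ⊔ PQ.2.1)) := by
      apply Finset.filter_congr
      intro y _
      simp [le_Hy_iff, mem_perp_sup]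
    rw [heq, card_T_perp, finrank_sup_two hne]
  rw [Finset.sum_congr rfl h, Finset.sum_const, smul_eq_mul, Finset.offDiag_card]

lemma card_points_line {L : Submodule F (Fin v → F)} (hL : finrank F L = 2) :
    (univ.filter fun P : PGPoint F v => P.1 ≤ L).card = Fintype.card F + 1 := by
  classical
  set q := Fintype.card F with hq
  have hq2 : 2 ≤ q := Fintype.one_lt_card
  obtain ⟨x0, hx0mem, hx00⟩ : ∃ x ∈ L, x ≠ 0 := by
    rw [← Submodule.ne_bot_iff]
    intro h; rw [h] at hL; simp at hL
  set D := (univ.filter fun x : Fin v → F => x ∈ L).erase 0 with hD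
  have hDcard : D.card = q ^ 2 - 1 := by
    rw [hD, Finset.card_erase_of_mem (by simp), card_filter_mem, hL]
  let f : (Fin v → F) → PGPoint F v := fun x =>
    if hx : x ≠ 0 then ⟨Submodule.span F {x}, finrank_span_singleton hx⟩
    else ⟨Submodule.span F {x0}, finrank_span_singleton hx00⟩
  have hmaps : ∀ x ∈ D, f x ∈ (univ.filter fun P : PGPoint F v => P.1 ≤ L) := by
    intro x hx
    obtain ⟨hx0, hxL⟩ := Finset.mem_erase.mp hx
    have hxL' : x ∈ L := (Finset.mem_filter.mp hxL).2
    simp only [Finset.mem_filter, Finset.mem_univ, true_and, f, dif_pos hx0]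
    exact (Submodule.span_singleton_le_iff_mem _ _).mpr hxL'
  have hcount := Finset.card_eq_sum_card_fiberwise hmaps
  have hfiber : ∀ P ∈ (univ.filter fun P : PGPoint F v => P.1 ≤ L),
      (D.filter fun x => f x = P).card = q - 1 := by
    intro P hP
    have hPL : P.1 ≤ L := (Finset.mem_filter.mp hP).2
    have heq : (D.filter fun x => f x = P) = (univ.filter fun x => x ∈ P.1).erase 0 := by
      ext x
      simp only [hD, Finset.mem_filter, Finset.mem_erase, Finset.mem_univ, true_and]
      constructor
      · rintro ⟨⟨hx0, hxL⟩, hfx⟩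
        refine ⟨hx0, ?_⟩
        have h1 : (f x).1 = P.1 := by rw [hfx]
        simp only [f, dif_pos hx0] at h1
        exact h1 ▸ Submodule.mem_span_singleton_self x
      · rintro ⟨hx0, hxP⟩
        refine ⟨⟨hx0, hPL hxP⟩, ?_⟩
        apply Subtype.ext
        show (f x).1 = P.1
        simp only [f, dif_pos hx0]
        exact Submodule.eq_of_le_of_finrank_eq
          ((Submodule.span_singleton_le_iff_mem _ _).mpr hxP)
          (by rw [finrank_span_singleton hx0, P.2])
    rw [heq, Finset.card_erase_of_mem (by simp), card_filter_mem, P.2, pow_one]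
  rw [Finset.sum_congr rfl hfiber, Finset.sum_const, smul_eq_mul] at hcount
  rw [hDcard] at hcount
  obtain ⟨m, hm⟩ : ∃ m, q = m + 2 := ⟨q - 2, by omega⟩
  rw [hm] at hcount ⊢
  have hsq : (m + 2) ^ 2 - 1 = (m + 2 + 1) * (m + 2 - 1) := by
    have h1 : m + 2 - 1 = m + 1 := by omega
    rw [h1]
    have h2 : (m + 2 + 1) * (m + 1) = m * m + 4 * m + 3 := by ring
    have h3 : (m + 2) ^ 2 = m * m + 4 * m + 4 := by ring
    omega
  rw [hsq] at hcount
  have := Nat.eq_of_mul_eq_mul_right (show 0 < m + 2 - 1 by omega) hcount.symm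
  omega

end Stmt13Aux

namespace Stmt13Aux
variable {F : Type} [Field F] [Fintype F] {v : ℕ}

lemma cast_sq_sub (a : ℕ) : ((a * a - a : ℕ) : ℤ) = (a : ℤ) * a - a := by
  have h : a ≤ a * a := by nlinarith
  rw [Nat.cast_sub h]; push_cast; ring

lemma forced_values {α : Type} (T : Finset α) (g : α → ℕ) (n : ℕ) (q a : ℤ)
    (hge : ∀ y ∈ T, 1 ≤ g y) (hle : ∀ y ∈ T, g y ≤ n)
    (hn : (n : ℤ) = q + 1)
    (hA : ∑ y ∈ T, (g y : ℤ) = (n : ℤ) * (q * a - 1))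
    (hB : ∑ y ∈ T, ((g y : ℤ) * (g y : ℤ) - (g y : ℤ)) = ((n : ℤ) * n - n) * (a - 1))
    (hT : (T.card : ℤ) = q * (q * a) - 1) :
    ∀ y ∈ T, g y = 1 ∨ g y = n := by
  have hzero : ∑ y ∈ T, ((g y : ℤ) - 1) * ((n : ℤ) - g y) = 0 := by
    have hexp : ∀ y ∈ T, ((g y : ℤ) - 1) * ((n : ℤ) - g y)
        = (n : ℤ) * (g y : ℤ) - ((g y : ℤ) * (g y : ℤ) - (g y : ℤ)) - (n : ℤ) :=
      fun y _ => by ring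
    rw [Finset.sum_congr rfl hexp, Finset.sum_sub_distrib, Finset.sum_sub_distrib,
      ← Finset.mul_sum, Finset.sum_const, nsmul_eq_mul, hA, hB, hT, hn]
    ring
  intro y hy
  have hnn : ∀ z ∈ T, 0 ≤ ((g z : ℤ) - 1) * ((n : ℤ) - g z) := by
    intro z hz
    have h1' : (1 : ℤ) ≤ (g z : ℤ) := by exact_mod_cast hge z hz
    have h2' : (g z : ℤ) ≤ (n : ℤ) := by exact_mod_cast hle z hz
    nlinarith
  have h0 := (Finset.sum_eq_zero_iff_of_nonneg hnn).mp hzero y hy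
  rcases mul_eq_zero.mp h0 with h | h
  · left
    have h' : (g y : ℤ) = 1 := by linarith
    exact_mod_cast h'
  · right
    have h' : (g y : ℤ) = (n : ℤ) := by linarith
    exact_mod_cast h'

end Stmt13Aux

set_option maxHeartbeats 1000000 in
open Stmt13Aux in
theorem stmt_13' (F : Type) [Field F] [Fintype F] (e : ℕ) (he : 1 ≤ e)
    (hF : Fintype.card F = 2 ^ e)
    (v : ℕ) (S : Set (PGPoint F v)) (hne : S.Nonempty)
    (hdiv : ∀ H : Submodule F (Fin v → F), finrank F H = v - 1 →
      S.ncard ≡ (S ∩ {P | P.1 ≤ H}).ncard [MOD 2]) :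
    2 ^ e + 1 ≤ S.ncard ∧
    (S.ncard = 2 ^ e + 1 →
      ∃ L : Submodule F (Fin v → F), finrank F L = 2 ∧ S = {P : PGPoint F v | P.1 ≤ L}) := by
  classical
  have hq2 : 2 ≤ Fintype.card F := Fintype.one_lt_card
  have hqeven : 2 ∣ Fintype.card F := by rw [hF]; exact dvd_pow_self 2 (by omega)
  rw [← hF]
  have hSfin : S.Finite := S.toFinite
  have hScard : S.ncard = hSfin.toFinset.card := Set.ncard_eq_toFinset_card S hSfin
  set Sf := hSfin.toFinset with hSfdef
  rw [hScard]
  obtain ⟨P0, hP0⟩ := hne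
  have hP0f : P0 ∈ Sf := hSfin.mem_toFinset.mpr hP0
  have hn1 : 1 ≤ Sf.card := Finset.card_pos.mpr ⟨P0, hP0f⟩
  have hv1 : 1 ≤ v := by
    have hfr := Submodule.finrank_le P0.1
    rw [P0.2, Module.finrank_pi, Fintype.card_fin] at hfr
    exact hfr
  have hmod : ∀ y : Fin v → F, y ≠ 0 →
      Sf.card % 2 = (Sf.filter fun P => P.1 ≤ Hy y).card % 2 := by
    intro y hy
    have h1 := hdiv (Hy y) (finrank_Hy hy)
    have h2 : S ∩ {P | P.1 ≤ Hy y} = ↑(Sf.filter fun P => P.1 ≤ Hy y) := by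
      ext P
      simp only [Set.mem_inter_iff, Set.mem_setOf_eq, Finset.coe_filter, hSfdef,
        hSfin.mem_toFinset]
    rw [h2, Set.ncard_coe_finset, hScard] at h1
    exact h1
  have hv2 : 2 ≤ v := by
    rcases Nat.lt_or_ge v 2 with hv | hv
    · exfalso
      have hveq : v = 1 := by omega
      subst hveq
      have hbot := hdiv ⊥ (by simp)
      have hempty : S ∩ {P : PGPoint F 1 | P.1 ≤ ⊥} = ∅ := by
        ext P
        simp only [Set.mem_inter_iff, Set.mem_setOf_eq, Set.mem_empty_iff_false, iff_false,
          not_and]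
        intro _ hle
        have hPbot : P.1 = ⊥ := le_bot_iff.mp hle
        have h2 := P.2
        rw [hPbot] at h2
        simp at h2
      rw [hempty, Set.ncard_empty] at hbot
      have hsingle : S = {P0} := by
        apply Set.eq_singleton_iff_unique_mem.mpr
        refine ⟨hP0, fun Q hQ => ?_⟩
        apply Subtype.ext
        have h1 : Q.1 = ⊤ := Submodule.eq_top_of_finrank_eq
          (by rw [Q.2, Module.finrank_pi, Fintype.card_fin])
        have h2 : P0.1 = ⊤ := Submodule.eq_top_of_finrank_eq
          (by rw [P0.2, Module.finrank_pi, Fintype.card_fin])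
        rw [h1, h2]
      rw [hsingle, Set.ncard_singleton] at hbot
      simp [Nat.ModEq] at hbot
    · exact hv
  have hb1 : 1 ≤ Fintype.card F ^ (v - 1) := Nat.one_le_pow _ _ (by omega)
  have ha1 : 1 ≤ Fintype.card F ^ (v - 2) := Nat.one_le_pow _ _ (by omega)
  have hc1 : 1 ≤ Fintype.card F ^ v := Nat.one_le_pow _ _ (by omega)
  have e2 : Fintype.card F ^ v = Fintype.card F * Fintype.card F ^ (v - 1) := by
    rw [← pow_succ']; congr 1; omega
  have e1 : Fintype.card F ^ (v - 1) = Fintype.card F * Fintype.card F ^ (v - 2) := by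
    rw [← pow_succ']; congr 1; omega
  -- Part 1: the lower bound
  have hbound : Fintype.card F + 1 ≤ Sf.card := by
    by_contra hlt
    push_neg at hlt
    have hnq : Sf.card ≤ Fintype.card F := by omega
    -- a hyperplane avoiding S
    have hBadcard : (Sf.biUnion fun P =>
        (univ.filter fun y : Fin v → F => y ≠ 0).filter fun y => y ∈ perp P.1).card
        ≤ Sf.card * (Fintype.card F ^ (v - 1) - 1) := by
      refine le_trans Finset.card_biUnion_le ?_
      have h : ∀ P ∈ Sf, ((univ.filter fun y : Fin v → F => y ≠ 0).filter
          fun y => y ∈ perp P.1).card = Fintype.card F ^ (v - 1) - 1 := by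
        intro P _
        rw [card_T_perp, P.2]
      rw [Finset.sum_congr rfl h, Finset.sum_const, smul_eq_mul]
    have hstrict : (Sf.biUnion fun P =>
        (univ.filter fun y : Fin v → F => y ≠ 0).filter fun y => y ∈ perp P.1).card
        < (univ.filter fun y : Fin v → F => y ≠ 0).card := by
      rw [card_T]
      refine lt_of_le_of_lt hBadcard ?_
      have hmul : Sf.card * (Fintype.card F ^ (v-1) - 1)
          ≤ Fintype.card F * (Fintype.card F ^ (v-1) - 1) :=
        Nat.mul_le_mul_right _ hnq
      refine lt_of_le_of_lt hmul ?_
      zify [hb1, hc1]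
      have e2' : ((Fintype.card F : ℤ)) ^ v
          = (Fintype.card F : ℤ) * (Fintype.card F : ℤ) ^ (v - 1) := by
        rw [← pow_succ']; congr 1; omega
      have hq2' : (2:ℤ) ≤ (Fintype.card F : ℤ) := by exact_mod_cast hq2
      have hb1' : (1:ℤ) ≤ (Fintype.card F : ℤ) ^ (v-1) := by exact_mod_cast hb1
      nlinarith [e2', hq2', hb1']
    obtain ⟨y0, hy0T, hy0B⟩ : ∃ y ∈ (univ.filter fun y : Fin v → F => y ≠ 0),
        y ∉ (Sf.biUnion fun P =>
          (univ.filter fun y : Fin v → F => y ≠ 0).filter fun y => y ∈ perp P.1) := by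
      by_contra h
      push_neg at h
      exact absurd (Finset.card_le_card h) (by omega)
    have hy0ne : y0 ≠ 0 := (Finset.mem_filter.mp hy0T).2
    have hf0 : (Sf.filter fun P => P.1 ≤ Hy y0).card = 0 := by
      rw [Finset.card_eq_zero, Finset.filter_eq_empty_iff]
      intro P hP hle
      exact hy0B (Finset.mem_biUnion.mpr ⟨P, hP,
        Finset.mem_filter.mpr ⟨hy0T, le_Hy_iff.mp hle⟩⟩)
    have heven := hmod y0 hy0ne
    rw [hf0] at heven
    -- a tangent hyperplane at P0
    have hB2card : ((Sf.erase P0).biUnion fun Q =>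
        (univ.filter fun y : Fin v → F => y ≠ 0).filter fun y => y ∈ perp (P0.1 ⊔ Q.1)).card
        ≤ (Sf.card - 1) * (Fintype.card F ^ (v - 2) - 1) := by
      refine le_trans Finset.card_biUnion_le ?_
      have h : ∀ Q ∈ Sf.erase P0, ((univ.filter fun y : Fin v → F => y ≠ 0).filter
          fun y => y ∈ perp (P0.1 ⊔ Q.1)).card = Fintype.card F ^ (v - 2) - 1 := by
        intro Q hQ
        rw [card_T_perp, finrank_sup_two (Finset.ne_of_mem_erase hQ).symm]
      rw [Finset.sum_congr rfl h, Finset.sum_const, smul_eq_mul,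
        Finset.card_erase_of_mem hP0f]
    have hstrict2 : ((Sf.erase P0).biUnion fun Q =>
        (univ.filter fun y : Fin v → F => y ≠ 0).filter fun y => y ∈ perp (P0.1 ⊔ Q.1)).card
        < ((univ.filter fun y : Fin v → F => y ≠ 0).filter fun y => y ∈ perp P0.1).card := by
      rw [card_T_perp, P0.2]
      refine lt_of_le_of_lt hB2card ?_
      zify [ha1, hb1, hn1]
      have e1' : ((Fintype.card F : ℤ)) ^ (v - 1)
          = (Fintype.card F : ℤ) * (Fintype.card F : ℤ) ^ (v - 2) := by
        rw [← pow_succ']; congr 1; omega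
      have hq2' : (2:ℤ) ≤ (Fintype.card F : ℤ) := by exact_mod_cast hq2
      have ha1' : (1:ℤ) ≤ (Fintype.card F : ℤ) ^ (v-2) := by exact_mod_cast ha1
      have hn1' : (1:ℤ) ≤ (Sf.card : ℤ) := by exact_mod_cast hn1
      have hnq' : (Sf.card : ℤ) ≤ (Fintype.card F : ℤ) := by exact_mod_cast hnq
      nlinarith [e1', hq2', ha1', hn1', hnq',
        mul_nonneg (sub_nonneg.mpr hnq') (sub_nonneg.mpr ha1')]
    obtain ⟨y1, hy1T, hy1B⟩ : ∃ y ∈ ((univ.filter fun y : Fin v → F => y ≠ 0).filter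
        fun y => y ∈ perp P0.1),
        y ∉ ((Sf.erase P0).biUnion fun Q =>
          (univ.filter fun y : Fin v → F => y ≠ 0).filter fun y => y ∈ perp (P0.1 ⊔ Q.1)) := by
      by_contra h
      push_neg at h
      exact absurd (Finset.card_le_card h) (by omega)
    obtain ⟨hy1T', hy1perp⟩ := Finset.mem_filter.mp hy1T
    have hy1ne : y1 ≠ 0 := (Finset.mem_filter.mp hy1T').2
    have hf1 : (Sf.filter fun P => P.1 ≤ Hy y1).card = 1 := by
      rw [Finset.card_eq_one]
      refine ⟨P0, Finset.eq_singleton_iff_unique_mem.mpr ⟨?_, ?_⟩⟩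
      · exact Finset.mem_filter.mpr ⟨hP0f, le_Hy_iff.mpr hy1perp⟩
      · intro Q hQ
        obtain ⟨hQf, hQle⟩ := Finset.mem_filter.mp hQ
        by_contra hne'
        apply hy1B
        exact Finset.mem_biUnion.mpr ⟨Q, Finset.mem_erase.mpr ⟨hne', hQf⟩,
          Finset.mem_filter.mpr ⟨hy1T', mem_perp_sup.mpr ⟨hy1perp, le_Hy_iff.mp hQle⟩⟩⟩
    have hodd := hmod y1 hy1ne
    rw [hf1] at hodd
    omega
  refine ⟨hbound, fun heqcard => ?_⟩
  -- Part 2: equality case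
  have hfodd : ∀ y ∈ (univ.filter fun y : Fin v → F => y ≠ 0),
      1 ≤ (Sf.filter fun P => P.1 ≤ Hy y).card
        ∧ (Sf.filter fun P => P.1 ≤ Hy y).card ≤ Sf.card := by
    intro y hyT
    have h := hmod y (Finset.mem_filter.mp hyT).2
    exact ⟨by omega, Finset.card_filter_le _ _⟩
  have hSA : ∑ y ∈ (univ.filter fun y : Fin v → F => y ≠ 0),
      ((Sf.filter fun P => P.1 ≤ Hy y).card : ℤ)
      = (Sf.card : ℤ) * ((Fintype.card F : ℤ) ^ (v - 1) - 1) := by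
    have h' := congrArg (Nat.cast : ℕ → ℤ) (identA (F := F) (v := v) Sf)
    push_cast [Nat.cast_sub hb1] at h'
    exact h'
  have hSB : ∑ y ∈ (univ.filter fun y : Fin v → F => y ≠ 0),
      (((Sf.filter fun P => P.1 ≤ Hy y).card : ℤ) * ((Sf.filter fun P => P.1 ≤ Hy y).card : ℤ)
        - ((Sf.filter fun P => P.1 ≤ Hy y).card : ℤ))
      = ((Sf.card : ℤ) * Sf.card - Sf.card) * ((Fintype.card F : ℤ) ^ (v - 2) - 1) := by
    calc ∑ y ∈ (univ.filter fun y : Fin v → F => y ≠ 0),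
          (((Sf.filter fun P => P.1 ≤ Hy y).card : ℤ) * ((Sf.filter fun P => P.1 ≤ Hy y).card : ℤ)
            - ((Sf.filter fun P => P.1 ≤ Hy y).card : ℤ))
        = ∑ y ∈ (univ.filter fun y : Fin v → F => y ≠ 0),
            (((Sf.filter fun P => P.1 ≤ Hy y).card * (Sf.filter fun P => P.1 ≤ Hy y).card
              - (Sf.filter fun P => P.1 ≤ Hy y).card : ℕ) : ℤ) :=
          Finset.sum_congr rfl fun y _ => (cast_sq_sub _).symm
      _ = (((Sf.card * Sf.card - Sf.card) * (Fintype.card F ^ (v - 2) - 1) : ℕ) : ℤ) := by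
          rw [← Nat.cast_sum, identB (F := F) (v := v) Sf]
      _ = ((Sf.card : ℤ) * Sf.card - Sf.card) * ((Fintype.card F : ℤ) ^ (v - 2) - 1) := by
          rw [Nat.cast_mul, cast_sq_sub, Nat.cast_sub ha1]
          push_cast
          ring
  have hTZ : (((univ.filter fun y : Fin v → F => y ≠ 0).card : ℕ) : ℤ)
      = (Fintype.card F : ℤ) ^ v - 1 := by
    rw [card_T, Nat.cast_sub hc1]
    push_cast
    ring
  have e1' : (Fintype.card F : ℤ) ^ (v - 1)
      = (Fintype.card F : ℤ) * (Fintype.card F : ℤ) ^ (v - 2) := by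
    rw [← pow_succ']; congr 1; omega
  have e2' : (Fintype.card F : ℤ) ^ v
      = (Fintype.card F : ℤ) * ((Fintype.card F : ℤ) * (Fintype.card F : ℤ) ^ (v - 2)) := by
    rw [← e1', ← pow_succ']; congr 1; omega
  have hione : ∀ y ∈ (univ.filter fun y : Fin v → F => y ≠ 0),
      (Sf.filter fun P => P.1 ≤ Hy y).card = 1
        ∨ (Sf.filter fun P => P.1 ≤ Hy y).card = Sf.card := by
    refine forced_values _ _ _ (Fintype.card F : ℤ) ((Fintype.card F : ℤ) ^ (v - 2))
      (fun y hy => (hfodd y hy).1) (fun y hy => (hfodd y hy).2) ?_ ?_ ?_ ?_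
    · exact_mod_cast heqcard
    · rw [hSA, e1']
    · rw [hSB]
    · rw [hTZ, e2']
  -- geometry
  obtain ⟨P, hP, Q, hQ, hPQ⟩ := Finset.one_lt_card.mp (show 1 < Sf.card by omega)
  have hL2 : finrank F ↥(P.1 ⊔ Q.1) = 2 := finrank_sup_two hPQ
  have hall : ∀ R ∈ Sf, R.1 ≤ P.1 ⊔ Q.1 := by
    by_contra hcon
    push_neg at hcon
    obtain ⟨R, hR, hRL⟩ := hcon
    have hM3 : finrank F ↥((P.1 ⊔ Q.1) ⊔ R.1) = 3 := finrank_sup_three hL2 hRL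
    have hv3 : 3 ≤ v := by
      have hfr := Submodule.finrank_le ((P.1 ⊔ Q.1) ⊔ R.1)
      rw [hM3, Module.finrank_pi, Fintype.card_fin] at hfr
      exact hfr
    have hlt3 : ((univ.filter fun y : Fin v → F => y ≠ 0).filter
          fun y => y ∈ perp ((P.1 ⊔ Q.1) ⊔ R.1)).card
        < ((univ.filter fun y : Fin v → F => y ≠ 0).filter
          fun y => y ∈ perp (P.1 ⊔ Q.1)).card := by
      rw [card_T_perp, card_T_perp, hM3, hL2]
      have hd1 : 1 ≤ Fintype.card F ^ (v - 3) := Nat.one_le_pow _ _ (by omega)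
      have hpow : Fintype.card F ^ (v - 3) < Fintype.card F ^ (v - 2) :=
        pow_lt_pow_right₀ (by omega) (by omega)
      omega
    have hsub3 : ((univ.filter fun y : Fin v → F => y ≠ 0).filter
          fun y => y ∈ perp ((P.1 ⊔ Q.1) ⊔ R.1))
        ⊆ ((univ.filter fun y : Fin v → F => y ≠ 0).filter
          fun y => y ∈ perp (P.1 ⊔ Q.1)) := by
      intro y hy
      obtain ⟨h1, h2⟩ := Finset.mem_filter.mp hy
      exact Finset.mem_filter.mpr ⟨h1, (mem_perp_sup.mp h2).1⟩
    obtain ⟨y, hyL, hyM⟩ : ∃ y ∈ ((univ.filter fun y : Fin v → F => y ≠ 0).filter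
          fun y => y ∈ perp (P.1 ⊔ Q.1)),
        y ∉ ((univ.filter fun y : Fin v → F => y ≠ 0).filter
          fun y => y ∈ perp ((P.1 ⊔ Q.1) ⊔ R.1)) := by
      by_contra h
      push_neg at h
      exact absurd (Finset.card_le_card h) (by omega)
    obtain ⟨hyT, hyperpL⟩ := Finset.mem_filter.mp hyL
    have hPin : P ∈ Sf.filter (fun P' => P'.1 ≤ Hy y) :=
      Finset.mem_filter.mpr ⟨hP, le_Hy_iff.mpr (mem_perp_sup.mp hyperpL).1⟩
    have hQin : Q ∈ Sf.filter (fun P' => P'.1 ≤ Hy y) :=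
      Finset.mem_filter.mpr ⟨hQ, le_Hy_iff.mpr (mem_perp_sup.mp hyperpL).2⟩
    have h2f : 2 ≤ (Sf.filter (fun P' => P'.1 ≤ Hy y)).card := by
      have hsub : ({P, Q} : Finset (PGPoint F v)) ⊆ Sf.filter (fun P' => P'.1 ≤ Hy y) := by
        intro Z hZ
        rcases Finset.mem_insert.mp hZ with rfl | hZ
        · exact hPin
        · rw [Finset.mem_singleton.mp hZ]; exact hQin
      calc 2 = ({P, Q} : Finset (PGPoint F v)).card := (Finset.card_pair hPQ).symm
        _ ≤ _ := Finset.card_le_card hsub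
    have hfn : (Sf.filter (fun P' => P'.1 ≤ Hy y)).card = Sf.card := by
      rcases hione y hyT with h | h
      · omega
      · exact h
    have hfull : Sf.filter (fun P' => P'.1 ≤ Hy y) = Sf :=
      Finset.eq_of_subset_of_card_le (Finset.filter_subset _ _) (le_of_eq hfn.symm)
    have hRmem : R ∈ Sf.filter (fun P' => P'.1 ≤ Hy y) := by rw [hfull]; exact hR
    have hRy : R.1 ≤ Hy y := (Finset.mem_filter.mp hRmem).2
    exact hyM (Finset.mem_filter.mpr ⟨hyT,
      mem_perp_sup.mpr ⟨hyperpL, le_Hy_iff.mp hRy⟩⟩)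
  refine ⟨P.1 ⊔ Q.1, hL2, ?_⟩
  have hsub : Sf ⊆ univ.filter (fun P' : PGPoint F v => P'.1 ≤ P.1 ⊔ Q.1) :=
    fun R hR => Finset.mem_filter.mpr ⟨Finset.mem_univ _, hall R hR⟩
  have hcardle : (univ.filter (fun P' : PGPoint F v => P'.1 ≤ P.1 ⊔ Q.1)).card ≤ Sf.card := by
    rw [card_points_line hL2]
    omega
  have hfe : Sf = univ.filter (fun P' : PGPoint F v => P'.1 ≤ P.1 ⊔ Q.1) :=
    Finset.eq_of_subset_of_card_le hsub hcardle
  ext R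
  constructor
  · intro hR
    have : R ∈ Sf := hSfin.mem_toFinset.mpr hR
    rw [hfe] at this
    exact (Finset.mem_filter.mp this).2
  · intro hR
    have : R ∈ Sf := by
      rw [hfe]
      exact Finset.mem_filter.mpr ⟨Finset.mem_univ _, hR⟩
    exact hSfin.mem_toFinset.mp this


/-- Let `q = 2^e` and `S` be a nonempty `2`-divisible set of points in
`PG(v-1,q)`. Then `|S| ≥ q+1`, and if `|S| = q+1` then `S` is the set of points of a line. -/
theorem stmt_13 (e : ℕ) (he : 1 ≤ e) (hF : Fintype.card F = 2 ^ e)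
    (v : ℕ) (S : Set (PGPoint F v)) (hne : S.Nonempty) (hdiv : IsDivisibleSet F 2 S) :
    2 ^ e + 1 ≤ S.ncard ∧
    (S.ncard = 2 ^ e + 1 →
      ∃ L : Submodule F (Fin v → F), finrank F L = 2 ∧ S = {P : PGPoint F v | P.1 ≤ L}) :=
  stmt_13' F e he hF v S hne (fun H hH => hdiv H hH)

end
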